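/- arXiv:2602.22358 — 2 statements merged into one kernel-verified Lean document; each statement's English description precedes it below -/
import Mathlib

section
/- Assume the MESS shrinking rule hypotheses, and let φ_{km} ∈ (ℓ_{k-1}(α), r_{k-1}(α)] be an angle sampled at step k. Then for all i with 1 ≤ i ≤ k−1 and all j: φ_{ij} < α if and only if φ_{ij} < φ_{km}, and φ_{ij} ≥ α if and only if φ_{ij} ≥ φ_{km}. -/
open Finset in
theorem stmt_2 (M k : ℕ) (α : ℝ) (hα : α ∈ Set.Ioc 0 (2 * Real.pi))
    (ℓ r : ℕ → ℝ) (φ : ℕ → Fin M → ℝ) (φkm : ℝ)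
    (hℓ0 : ℓ 0 = 0) (hr0 : r 0 = 2 * Real.pi)
    (hmem : ∀ i < k - 1, ∀ j, φ i j ∈ Set.Ioc (ℓ i) (r i))
    (hℓ : ∀ i < k - 1, ℓ (i + 1) =
      (insert (ℓ i) (((univ : Finset (Fin M)).filter fun j => φ i j < α).image (φ i))).max'
        (insert_nonempty _ _))
    (hr : ∀ i < k - 1, r (i + 1) =
      (insert (r i) (((univ : Finset (Fin M)).filter fun j => α ≤ φ i j).image (φ i))).min'
        (insert_nonempty _ _))
    (hkm : φkm ∈ Set.Ioc (ℓ (k - 1)) (r (k - 1))) :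
    ∀ i < k - 1, ∀ j, (φ i j < α ↔ φ i j < φkm) ∧ (α ≤ φ i j ↔ φkm ≤ φ i j) := by
  intro i hi j
  have hstepℓ : ∀ m < k - 1, ℓ m ≤ ℓ (m + 1) := by
    intro m hm
    rw [hℓ m hm]
    exact Finset.le_max' _ _ (Finset.mem_insert_self _ _)
  have hstepr : ∀ m < k - 1, r (m + 1) ≤ r m := by
    intro m hm
    rw [hr m hm]
    exact Finset.min'_le _ _ (Finset.mem_insert_self _ _)
  have hℓmono : ∀ n, n ≤ k - 1 → i + 1 ≤ n → ℓ (i + 1) ≤ ℓ n := by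
    intro n
    induction n with
    | zero => intro _ h; omega
    | succ m ih =>
      intro hn h
      rcases Nat.lt_or_ge (i + 1) (m + 1) with hlt | hge
      · exact (ih (by omega) (by omega)).trans (hstepℓ m (by omega))
      · have : i + 1 = m + 1 := by omega
        rw [this]
  have hrmono : ∀ n, n ≤ k - 1 → i + 1 ≤ n → r n ≤ r (i + 1) := by
    intro n
    induction n with
    | zero => intro _ h; omega
    | succ m ih =>
      intro hn h
      rcases Nat.lt_or_ge (i + 1) (m + 1) with hlt | hge
      · exact (hstepr m (by omega)).trans (ih (by omega) (by omega))
      · have : i + 1 = m + 1 := by omega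
        rw [this]
  have h1 : φ i j < α → φ i j ≤ ℓ (k - 1) := by
    intro h
    have h0 : φ i j ≤ ℓ (i + 1) := by
      rw [hℓ i hi]
      exact Finset.le_max' _ _ (Finset.mem_insert_of_mem
        (Finset.mem_image_of_mem (φ i) (Finset.mem_filter.mpr ⟨Finset.mem_univ j, h⟩)))
    exact h0.trans (hℓmono (k - 1) le_rfl (by omega))
  have h2 : α ≤ φ i j → r (k - 1) ≤ φ i j := by
    intro h
    have h0 : r (i + 1) ≤ φ i j := by
      rw [hr i hi]
      exact Finset.min'_le _ _ (Finset.mem_insert_of_mem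
        (Finset.mem_image_of_mem (φ i) (Finset.mem_filter.mpr ⟨Finset.mem_univ j, h⟩)))
    exact (hrmono (k - 1) le_rfl (by omega)).trans h0
  obtain ⟨hk1, hk2⟩ := hkm
  constructor
  · constructor
    · intro h; exact (h1 h).trans_lt hk1
    · intro h
      by_contra hc
      push_neg at hc
      have := h2 hc
      linarith
  · constructor
    · intro h; exact hk2.trans (h2 h)
    · intro h
      by_contra hc
      push_neg at hc
      have := h1 hc
      linarith
end

section
/- Assume the MESS shrinking rule hypotheses and let φ_{km} ∈ (ℓ_{k-1}(α), r_{k-1}(α)]. Then the brackets are invariant under swapping the roles of α and φ_{km}: for all 0 ≤ i ≤ k−1, ℓ_i(α, φ_{1:i}) = ℓ_i(φ_{km}, φ_{1:i}) and r_i(α, φ_{1:i}) = r_i(φ_{km}, φ_{1:i}), where ℓ_i(β, φ_{1:i}) denotes the interval endpoints computed with reference angle β instead of α. -/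
open Finset in
theorem stmt_3 (M k : ℕ) (α : ℝ) (hα : α ∈ Set.Ioc 0 (2 * Real.pi))
    (ℓα rα ℓβ rβ : ℕ → ℝ) (φ : ℕ → Fin M → ℝ) (φkm : ℝ)
    (hℓα0 : ℓα 0 = 0) (hrα0 : rα 0 = 2 * Real.pi)
    (hℓβ0 : ℓβ 0 = 0) (hrβ0 : rβ 0 = 2 * Real.pi)
    (hmem : ∀ i < k - 1, ∀ j, φ i j ∈ Set.Ioc (ℓα i) (rα i))
    (hℓα : ∀ i < k - 1, ℓα (i + 1) =
      (insert (ℓα i) (((univ : Finset (Fin M)).filter fun j => φ i j < α).image (φ i))).max'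
        (insert_nonempty _ _))
    (hrα : ∀ i < k - 1, rα (i + 1) =
      (insert (rα i) (((univ : Finset (Fin M)).filter fun j => α ≤ φ i j).image (φ i))).min'
        (insert_nonempty _ _))
    (hℓβ : ∀ i < k - 1, ℓβ (i + 1) =
      (insert (ℓβ i) (((univ : Finset (Fin M)).filter fun j => φ i j < φkm).image (φ i))).max'
        (insert_nonempty _ _))
    (hrβ : ∀ i < k - 1, rβ (i + 1) =
      (insert (rβ i) (((univ : Finset (Fin M)).filter fun j => φkm ≤ φ i j).image (φ i))).min'
        (insert_nonempty _ _))
    (hkm : φkm ∈ Set.Ioc (ℓα (k - 1)) (rα (k - 1))) :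
    ∀ i ≤ k - 1, ℓα i = ℓβ i ∧ rα i = rβ i := by
  have stepℓ : ∀ i < k - 1, ℓα i ≤ ℓα (i + 1) := by
    intro i hi
    rw [hℓα i hi]
    exact Finset.le_max' _ _ (Finset.mem_insert_self _ _)
  have stepr : ∀ i < k - 1, rα (i + 1) ≤ rα i := by
    intro i hi
    rw [hrα i hi]
    exact Finset.min'_le _ _ (Finset.mem_insert_self _ _)
  have monoℓ : ∀ m ≤ k - 1, ∀ i ≤ m, ℓα i ≤ ℓα m := by
    intro m hm
    induction m with
    | zero => intro i hi; simp [Nat.le_zero.mp hi]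
    | succ n ih =>
      intro i hi
      rcases Nat.lt_succ_iff_lt_or_eq.mp (Nat.lt_succ_of_le hi) with h | h
      · exact le_trans (ih (le_trans (Nat.le_succ n) hm) i (Nat.lt_succ_iff.mp h))
          (stepℓ n (Nat.lt_of_succ_le hm))
      · exact le_of_eq (congrArg ℓα h)
  have monor : ∀ m ≤ k - 1, ∀ i ≤ m, rα m ≤ rα i := by
    intro m hm
    induction m with
    | zero => intro i hi; simp [Nat.le_zero.mp hi]
    | succ n ih =>
      intro i hi
      rcases Nat.lt_succ_iff_lt_or_eq.mp (Nat.lt_succ_of_le hi) with h | h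
      · exact le_trans (stepr n (Nat.lt_of_succ_le hm))
          (ih (le_trans (Nat.le_succ n) hm) i (Nat.lt_succ_iff.mp h))
      · exact le_of_eq (congrArg rα h.symm)
  have hub : ∀ i < k - 1, ∀ j, φ i j < α → φ i j ≤ ℓα (k - 1) := by
    intro i hi j hj
    have h1 : φ i j ≤ ℓα (i + 1) := by
      rw [hℓα i hi]
      exact Finset.le_max' _ _ (Finset.mem_insert_of_mem
        (Finset.mem_image_of_mem _ (by simp [hj])))
    exact h1.trans (monoℓ (k - 1) le_rfl (i + 1) hi)
  have hlb : ∀ i < k - 1, ∀ j, α ≤ φ i j → rα (k - 1) ≤ φ i j := by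
    intro i hi j hj
    have h1 : rα (i + 1) ≤ φ i j := by
      rw [hrα i hi]
      exact Finset.min'_le _ _ (Finset.mem_insert_of_mem
        (Finset.mem_image_of_mem _ (by simp [hj])))
    exact le_trans (monor (k - 1) le_rfl (i + 1) hi) h1
  have hiff : ∀ i < k - 1, ∀ j, (φ i j < α ↔ φ i j < φkm) := by
    intro i hi j
    constructor
    · intro h
      exact lt_of_le_of_lt (hub i hi j h) hkm.1
    · intro h
      by_contra hc
      push_neg at hc
      exact absurd (le_trans hkm.2 (hlb i hi j hc)) (not_le.mpr h)
  intro i hik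
  induction i with
  | zero => exact ⟨hℓα0.trans hℓβ0.symm, hrα0.trans hrβ0.symm⟩
  | succ n ih =>
    have hn : n < k - 1 := Nat.lt_of_succ_le hik
    obtain ⟨hl, hr⟩ := ih (le_of_lt hn)
    have hsetl : ((univ : Finset (Fin M)).filter fun j => φ n j < α) =
        ((univ : Finset (Fin M)).filter fun j => φ n j < φkm) := by
      ext j; simp [hiff n hn j]
    have hsetr : ((univ : Finset (Fin M)).filter fun j => α ≤ φ n j) =
        ((univ : Finset (Fin M)).filter fun j => φkm ≤ φ n j) := by
      ext j
      simp only [Finset.mem_filter, Finset.mem_univ, true_and, ← not_lt]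
      exact not_congr (hiff n hn j)
    constructor
    · rw [hℓα n hn, hℓβ n hn, hl, hsetl]
    · rw [hrα n hn, hrβ n hn, hr, hsetr]
end
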